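/- Let M ∈ ℝ^{m×n} be partitioned in blocks with top-left s×s block A_M, let G ∈ ℝ^{m×s}, S ∈ ℝ^{s×n} satisfy ‖M − GS‖₂ ≤ e_s, let G_A be the top s rows of G and S_A the first s columns of S. Assume: (1) σ_s(GS) > 0; (2) there is γ ≥ 1 with σ_s(G)·σ_s(S) = σ_s(GS)/γ; (3) there is β ≥ 1 with σ_s(G_A) ≥ σ_s(G)/β and σ_s(S_A) ≥ σ_s(S)/β. Then (σ_s(M) − e_s)/(β²γ) − e_s ≤ σ_s(A_M). -/

import Mathlib

open Matrix

/-- `sv A k` is the `k`-th largest singular value (1-indexed) of the real matrix `A`,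
computed as the `k`-th largest square root of an eigenvalue of `Aᵀ * A`. -/
noncomputable def sv {p q : ℕ} (A : Matrix (Fin p) (Fin q) ℝ) (k : ℕ) : ℝ :=
  if h : q - k < q then
    (fun i : Fin q => Real.sqrt ((Matrix.isHermitian_conjTranspose_mul_self A).eigenvalues i))
      (Tuple.sort (fun i : Fin q =>
        Real.sqrt ((Matrix.isHermitian_conjTranspose_mul_self A).eigenvalues i)) ⟨q - k, h⟩)
  else 0

noncomputable def svf {p q : ℕ} (A : Matrix (Fin p) (Fin q) ℝ) : Fin q → ℝ :=
  fun i => Real.sqrt ((Matrix.isHermitian_conjTranspose_mul_self A).eigenvalues i)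

lemma sv_eq {p q : ℕ} (A : Matrix (Fin p) (Fin q) ℝ) (k : ℕ) (h : q - k < q) :
    sv A k = svf A (Tuple.sort (svf A) ⟨q - k, h⟩) := by
  rw [sv, dif_pos h]; rfl

lemma sv_nonneg {p q : ℕ} (A : Matrix (Fin p) (Fin q) ℝ) (k : ℕ) : 0 ≤ sv A k := by
  rw [sv]; split
  · exact Real.sqrt_nonneg _
  · exact le_refl 0

lemma svf_nonneg {p q : ℕ} (A : Matrix (Fin p) (Fin q) ℝ) (i : Fin q) : 0 ≤ svf A i :=
  Real.sqrt_nonneg _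

lemma svf_sq {p q : ℕ} (A : Matrix (Fin p) (Fin q) ℝ) (i : Fin q) :
    svf A i ^ 2 = (Matrix.isHermitian_conjTranspose_mul_self A).eigenvalues i := by
  have h : (Aᵀ * A).PosSemidef := by
    have := Matrix.posSemidef_conjTranspose_mul_self A
    rwa [Matrix.conjTranspose_eq_transpose_of_trivial] at this
  exact Real.sq_sqrt (h.eigenvalues_nonneg i)


def toEuc {k : ℕ} (x : Fin k → ℝ) : EuclideanSpace ℝ (Fin k) := WithLp.toLp 2 x

variable {p q : ℕ}

local notation "⟪" x ", " y "⟫" => @inner ℝ _ _ x y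

lemma dot_eq_inner (x y : EuclideanSpace ℝ (Fin q)) :
    (x : Fin q → ℝ) ⬝ᵥ (y : Fin q → ℝ) = ⟪x, y⟫ := by
  simp [PiLp.inner_apply, dotProduct, mul_comm]

lemma mulVec_inner_symm (A : Matrix (Fin p) (Fin q) ℝ)
    (u : EuclideanSpace ℝ (Fin q)) (v : EuclideanSpace ℝ (Fin p)) :
    ⟪toEuc (A *ᵥ u), v⟫ = ⟪u, toEuc (Aᵀ *ᵥ v)⟫ := by
  rw [← dot_eq_inner, ← dot_eq_inner]
  show (A *ᵥ u) ⬝ᵥ (v : Fin p → ℝ) = (u : Fin q → ℝ) ⬝ᵥ (Aᵀ *ᵥ v)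
  rw [Matrix.dotProduct_mulVec, Matrix.vecMul_transpose, dotProduct_comm]

namespace SVhelp

noncomputable def evB (A : Matrix (Fin p) (Fin q) ℝ) :
    OrthonormalBasis (Fin q) ℝ (EuclideanSpace ℝ (Fin q)) :=
  (Matrix.isHermitian_conjTranspose_mul_self A).eigenvectorBasis

noncomputable def ev (A : Matrix (Fin p) (Fin q) ℝ) : Fin q → ℝ :=
  (Matrix.isHermitian_conjTranspose_mul_self A).eigenvalues

lemma repr_H (A : Matrix (Fin p) (Fin q) ℝ) (x : EuclideanSpace ℝ (Fin q)) (i : Fin q) :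
    (evB A).repr (toEuc ((Aᵀ * A) *ᵥ x)) i = ev A i * (evB A).repr x i := by
  rw [OrthonormalBasis.repr_apply_apply, OrthonormalBasis.repr_apply_apply]
  rw [real_inner_comm]
  have hsym : (Aᵀ * A)ᵀ = Aᵀ * A := by
    rw [Matrix.transpose_mul, Matrix.transpose_transpose]
  have h1 : ⟪toEuc ((Aᵀ * A) *ᵥ x), (evB A) i⟫ = ⟪x, toEuc ((Aᵀ * A) *ᵥ ((evB A) i))⟫ := by
    rw [mulVec_inner_symm, hsym]
  rw [h1]
  have h2 : (Aᵀ * A) *ᵥ ((evB A) i : Fin q → ℝ) = ev A i • ((evB A) i : Fin q → ℝ) :=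
    (Matrix.isHermitian_conjTranspose_mul_self A).mulVec_eigenvectorBasis i
  have h3 : toEuc ((Aᵀ * A) *ᵥ ((evB A) i : Fin q → ℝ)) = ev A i • (evB A) i := by
    rw [h2]; rfl
  rw [h3, real_inner_smul_right, real_inner_comm]

lemma normsq_mulVec (A : Matrix (Fin p) (Fin q) ℝ) (x : EuclideanSpace ℝ (Fin q)) :
    ‖toEuc (A *ᵥ x)‖ ^ 2 = ∑ i, ev A i * ((evB A).repr x i) ^ 2 := by
  rw [← real_inner_self_eq_norm_sq]
  rw [mulVec_inner_symm A x (toEuc (A *ᵥ x))]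
  have e : toEuc (Aᵀ *ᵥ (toEuc (A *ᵥ x))) = toEuc ((Aᵀ * A) *ᵥ x) := by
    show toEuc (Aᵀ *ᵥ (A *ᵥ x)) = _
    rw [Matrix.mulVec_mulVec]
  rw [e]
  rw [← (evB A).repr.inner_map_map x (toEuc ((Aᵀ * A) *ᵥ x))]
  rw [PiLp.inner_apply]
  refine Finset.sum_congr rfl fun i _ => ?_
  rw [repr_H]
  simp [sq]; ring

lemma normsq_self (x : EuclideanSpace ℝ (Fin q)) (b : OrthonormalBasis (Fin q) ℝ (EuclideanSpace ℝ (Fin q))) :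
    ‖x‖ ^ 2 = ∑ i, (b.repr x i) ^ 2 := by
  rw [← real_inner_self_eq_norm_sq, ← b.repr.inner_map_map x x, PiLp.inner_apply]
  refine Finset.sum_congr rfl fun i _ => ?_
  simp [sq]

end SVhelp

namespace SVhelp

lemma repr_zero_of_span {b : OrthonormalBasis (Fin q) ℝ (EuclideanSpace ℝ (Fin q))}
    {J : Set (Fin q)} {x : EuclideanSpace ℝ (Fin q)}
    (hx : x ∈ Submodule.span ℝ (⇑b '' J)) {i : Fin q} (hi : i ∉ J) :
    b.repr x i = 0 := by
  rw [OrthonormalBasis.repr_apply_apply]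
  have hle : Submodule.span ℝ (⇑b '' J) ≤ LinearMap.ker ((innerSL ℝ (b i) : EuclideanSpace ℝ (Fin q) →L[ℝ] ℝ) : EuclideanSpace ℝ (Fin q) →ₗ[ℝ] ℝ) := by
    rw [Submodule.span_le]
    rintro y ⟨j, hj, rfl⟩
    simp only [SetLike.mem_coe, LinearMap.mem_ker, ContinuousLinearMap.coe_coe, innerSL_apply_apply]
    exact b.orthonormal.2 (fun h => hi (h ▸ hj))
  have := hle hx
  simpa using this

lemma norm_mulVec_le (A : Matrix (Fin p) (Fin q) ℝ) {J : Set (Fin q)}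
    {x : EuclideanSpace ℝ (Fin q)} (hx : x ∈ Submodule.span ℝ (⇑(evB A) '' J))
    {c : ℝ} (hc : 0 ≤ c) (hJ : ∀ i ∈ J, svf A i ≤ c) :
    ‖toEuc (A *ᵥ x)‖ ≤ c * ‖x‖ := by
  have hsq : ‖toEuc (A *ᵥ x)‖ ^ 2 ≤ (c * ‖x‖) ^ 2 := by
    rw [normsq_mulVec, mul_pow, normsq_self x (evB A), Finset.mul_sum]
    refine Finset.sum_le_sum fun i _ => ?_
    by_cases h : i ∈ J
    · have h1 : ev A i ≤ c ^ 2 := by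
        have := hJ i h
        have h2 : svf A i ^ 2 = ev A i := svf_sq A i
        nlinarith [svf_nonneg A i]
      exact mul_le_mul_of_nonneg_right h1 (sq_nonneg _)
    · rw [repr_zero_of_span hx h]
      simp
  have h1 : 0 ≤ c * ‖x‖ := mul_nonneg hc (norm_nonneg _)
  nlinarith [norm_nonneg (toEuc (A *ᵥ x))]

lemma norm_mulVec_ge (A : Matrix (Fin p) (Fin q) ℝ) {J : Set (Fin q)}
    {x : EuclideanSpace ℝ (Fin q)} (hx : x ∈ Submodule.span ℝ (⇑(evB A) '' J))
    {c : ℝ} (hc : 0 ≤ c) (hJ : ∀ i ∈ J, c ≤ svf A i) :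
    c * ‖x‖ ≤ ‖toEuc (A *ᵥ x)‖ := by
  have hsq : (c * ‖x‖) ^ 2 ≤ ‖toEuc (A *ᵥ x)‖ ^ 2 := by
    rw [normsq_mulVec, mul_pow, normsq_self x (evB A), Finset.mul_sum]
    refine Finset.sum_le_sum fun i _ => ?_
    by_cases h : i ∈ J
    · have h1 : c ^ 2 ≤ ev A i := by
        have := hJ i h
        have h2 : svf A i ^ 2 = ev A i := svf_sq A i
        nlinarith [svf_nonneg A i]
      exact mul_le_mul_of_nonneg_right h1 (sq_nonneg _)
    · rw [repr_zero_of_span hx h]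
      simp
  nlinarith [norm_nonneg (toEuc (A *ᵥ x)), mul_nonneg hc (norm_nonneg x)]

lemma norm_mulVec_basis (A : Matrix (Fin p) (Fin q) ℝ) (i : Fin q) :
    ‖toEuc (A *ᵥ ((evB A) i))‖ = svf A i := by
  have h := normsq_mulVec A ((evB A) i)
  rw [(evB A).repr_self i] at h
  have h2 : ∑ j, ev A j * ((EuclideanSpace.single i (1:ℝ)) j) ^ 2 = ev A i := by
    rw [Finset.sum_eq_single i]
    · simp
    · intro b _ hb; simp [EuclideanSpace.single_apply, hb]
    · simp
  rw [h2] at h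
  have h3 : svf A i ^ 2 = ev A i := svf_sq A i
  nlinarith [norm_nonneg (toEuc (A *ᵥ ((evB A) i))), svf_nonneg A i]

end SVhelp

namespace SVhelp

lemma span_univ_mem (A : Matrix (Fin p) (Fin q) ℝ) (x : EuclideanSpace ℝ (Fin q)) :
    x ∈ Submodule.span ℝ (⇑(evB A) '' Set.univ) := by
  rw [Set.image_univ, ← OrthonormalBasis.coe_toBasis, Module.Basis.span_eq]
  trivial

lemma svf_le_sv_one (A : Matrix (Fin p) (Fin q) ℝ) (hq : 0 < q) (i : Fin q) :
    svf A i ≤ sv A 1 := by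
  have h : q - 1 < q := by omega
  rw [sv_eq A 1 h]
  have hmono := Tuple.monotone_sort (svf A)
  have heq : svf A i = (svf A ∘ Tuple.sort (svf A)) ((Tuple.sort (svf A))⁻¹ i) := by
    simp [Function.comp]
  rw [heq]
  refine hmono ?_
  rw [Fin.le_def]
  have := ((Tuple.sort (svf A))⁻¹ i).isLt
  simp
  omega

lemma sv_min_le_svf (A : Matrix (Fin p) (Fin q) ℝ) (hq : 0 < q) (i : Fin q) :
    sv A q ≤ svf A i := by
  have h : q - q < q := by omega
  rw [sv_eq A q h]
  have hmono := Tuple.monotone_sort (svf A)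
  have heq : svf A i = (svf A ∘ Tuple.sort (svf A)) ((Tuple.sort (svf A))⁻¹ i) := by
    simp [Function.comp]
  rw [heq]
  refine hmono ?_
  rw [Fin.le_def]
  simp

lemma norm_le_sv_one (A : Matrix (Fin p) (Fin q) ℝ) (hq : 0 < q)
    (x : EuclideanSpace ℝ (Fin q)) : ‖toEuc (A *ᵥ x)‖ ≤ sv A 1 * ‖x‖ :=
  norm_mulVec_le A (span_univ_mem A x) (sv_nonneg A 1)
    (fun i _ => svf_le_sv_one A hq i)

lemma sv_min_mul_norm_le (A : Matrix (Fin p) (Fin q) ℝ) (hq : 0 < q)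
    (x : EuclideanSpace ℝ (Fin q)) : sv A q * ‖x‖ ≤ ‖toEuc (A *ᵥ x)‖ :=
  norm_mulVec_ge A (span_univ_mem A x) (sv_nonneg A q)
    (fun i _ => sv_min_le_svf A hq i)

lemma sv_attained (A : Matrix (Fin p) (Fin q) ℝ) (k : ℕ) (h : q - k < q) :
    ∃ x : EuclideanSpace ℝ (Fin q), ‖x‖ = 1 ∧ ‖toEuc (A *ᵥ x)‖ = sv A k := by
  refine ⟨evB A (Tuple.sort (svf A) ⟨q - k, h⟩), ?_, ?_⟩
  · exact (evB A).orthonormal.1 _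
  · rw [norm_mulVec_basis, sv_eq A k h]

lemma sv_le_of_forall (A : Matrix (Fin p) (Fin q) ℝ) (k : ℕ) (h : q - k < q)
    {c : ℝ} (hb : ∀ x : EuclideanSpace ℝ (Fin q), ‖x‖ = 1 → ‖toEuc (A *ᵥ x)‖ ≤ c) :
    sv A k ≤ c := by
  obtain ⟨x, hx1, hx2⟩ := sv_attained A k h
  rw [← hx2]
  exact hb x hx1

end SVhelp

namespace SVhelp

lemma sv_weyl (A B : Matrix (Fin p) (Fin q) ℝ) (k : ℕ) (hk1 : 1 ≤ k) (hkq : k ≤ q) :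
    sv A k ≤ sv B k + sv (A - B) 1 := by
  have hq : 0 < q := lt_of_lt_of_le hk1 hkq
  set j : ℕ := q - k with hjdef
  have hj : j < q := by omega
  -- index families
  set σA := Tuple.sort (svf A) with hσA
  set σB := Tuple.sort (svf B) with hσB
  have hjk : q - k = j := rfl
  -- families of eigenvectors
  set fB : Fin (j + 1) → Fin q := fun t => σB ⟨(t : ℕ), by omega⟩ with hfB
  set fA : Fin (q - j) → Fin q := fun t => σA ⟨j + (t : ℕ), by omega⟩ with hfA
  have hfBinj : Function.Injective fB := by
    intro a b hab
    have h := σB.injective hab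
    exact Fin.ext (by simpa using congrArg Fin.val h)
  have hfAinj : Function.Injective fA := by
    intro a b hab
    have h := σA.injective hab
    have h2 : j + (a : ℕ) = j + (b : ℕ) := by simpa using congrArg Fin.val h
    exact Fin.ext (by omega)
  set W := Submodule.span ℝ (Set.range (⇑(evB B) ∘ fB)) with hW
  set U := Submodule.span ℝ (Set.range (⇑(evB A) ∘ fA)) with hU
  have hWrank : Module.finrank ℝ W = j + 1 := by
    rw [hW, finrank_span_eq_card (((evB B).orthonormal.comp fB hfBinj).linearIndependent)]
    simp
  have hUrank : Module.finrank ℝ U = q - j := by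
    rw [hU, finrank_span_eq_card (((evB A).orthonormal.comp fA hfAinj).linearIndependent)]
    simp
  have htot : Module.finrank ℝ (EuclideanSpace ℝ (Fin q)) = q := by
    simp [finrank_euclideanSpace]
  have hsup : Module.finrank ℝ ↥(W ⊔ U) ≤ q := by
    have h := Submodule.finrank_le (W ⊔ U)
    rwa [htot] at h
  have hinf : 0 < Module.finrank ℝ ↥(W ⊓ U) := by
    have := Submodule.finrank_sup_add_finrank_inf_eq W U
    omega
  have : Nontrivial ↥(W ⊓ U) := Module.nontrivial_of_finrank_pos hinf
  obtain ⟨y, hy⟩ := exists_ne (0 : ↥(W ⊓ U))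
  set x : EuclideanSpace ℝ (Fin q) := (y : EuclideanSpace ℝ (Fin q)) with hxdef
  have hx0 : x ≠ 0 := fun h => hy (Subtype.ext h)
  have hxW : x ∈ W := (Submodule.mem_inf.1 y.2).1
  have hxU : x ∈ U := (Submodule.mem_inf.1 y.2).2
  have hxnorm : 0 < ‖x‖ := norm_pos_iff.2 hx0
  -- lower bound on ‖A x‖
  have hA : sv A k * ‖x‖ ≤ ‖toEuc (A *ᵥ x)‖ := by
    refine norm_mulVec_ge A (J := Set.range fA) ?_ (sv_nonneg A k) ?_
    · rw [← Set.range_comp]; exact hxU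
    · rintro i ⟨t, rfl⟩
      rw [sv_eq A k hj]
      have hmono := Tuple.monotone_sort (svf A)
      have : (⟨q - k, hj⟩ : Fin q) ≤ (⟨j + (t : ℕ), by omega⟩ : Fin q) := by
        rw [Fin.le_def]
        show q - k ≤ j + (t : ℕ)
        omega
      exact hmono this
  -- upper bound on ‖B x‖
  have hB : ‖toEuc (B *ᵥ x)‖ ≤ sv B k * ‖x‖ := by
    refine norm_mulVec_le B (J := Set.range fB) ?_ (sv_nonneg B k) ?_
    · rw [← Set.range_comp]; exact hxW
    · rintro i ⟨t, rfl⟩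
      rw [sv_eq B k hj]
      have hmono := Tuple.monotone_sort (svf B)
      have : (⟨(t : ℕ), by omega⟩ : Fin q) ≤ (⟨q - k, hj⟩ : Fin q) := by
        rw [Fin.le_def]
        show (t : ℕ) ≤ q - k
        have := t.isLt
        omega
      exact hmono this
  have hE : ‖toEuc ((A - B) *ᵥ x)‖ ≤ sv (A - B) 1 * ‖x‖ := norm_le_sv_one (A - B) hq x
  have hsplit : toEuc (A *ᵥ x) = toEuc (B *ᵥ x) + toEuc ((A - B) *ᵥ x) := by
    rw [toEuc, toEuc, toEuc, ← WithLp.toLp_add]; congr 1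
    rw [Matrix.sub_mulVec]
    funext i
    simp
  have htri : ‖toEuc (A *ᵥ x)‖ ≤ ‖toEuc (B *ᵥ x)‖ + ‖toEuc ((A - B) *ᵥ x)‖ := by
    rw [hsplit]; exact norm_add_le _ _
  have : sv A k * ‖x‖ ≤ (sv B k + sv (A - B) 1) * ‖x‖ := by
    calc sv A k * ‖x‖ ≤ ‖toEuc (A *ᵥ x)‖ := hA
    _ ≤ ‖toEuc (B *ᵥ x)‖ + ‖toEuc ((A - B) *ᵥ x)‖ := htri
    _ ≤ sv B k * ‖x‖ + sv (A - B) 1 * ‖x‖ := add_le_add hB hE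
    _ = (sv B k + sv (A - B) 1) * ‖x‖ := by ring
  exact le_of_mul_le_mul_right this hxnorm

end SVhelp

namespace SVhelp

lemma submatrix_pad (a b c : ℕ) (Z : Matrix (Fin (a + b)) (Fin (a + c)) ℝ)
    (v : EuclideanSpace ℝ (Fin a)) :
    ∃ w : EuclideanSpace ℝ (Fin (a + c)), ‖w‖ = ‖v‖ ∧
      ‖toEuc ((Z.submatrix (Fin.castAdd b) (Fin.castAdd c)) *ᵥ v)‖ ≤ ‖toEuc (Z *ᵥ w)‖ := by
  set w : EuclideanSpace ℝ (Fin (a + c)) :=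
    toEuc (Fin.append (v : Fin a → ℝ) (fun _ : Fin c => (0:ℝ))) with hw
  refine ⟨w, ?_, ?_⟩
  · rw [EuclideanSpace.norm_eq, EuclideanSpace.norm_eq]
    congr 1
    rw [Fin.sum_univ_add]
    simp [hw, toEuc, Fin.append_left, Fin.append_right]
  · have key : ∀ i : Fin a,
        ((Z.submatrix (Fin.castAdd b) (Fin.castAdd c)) *ᵥ (v : Fin a → ℝ)) i
          = (Z *ᵥ (w : Fin (a + c) → ℝ)) (Fin.castAdd b i) := by
      intro i
      simp only [Matrix.mulVec, dotProduct, Matrix.submatrix_apply]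
      rw [Fin.sum_univ_add]
      simp [hw, toEuc, Fin.append_left, Fin.append_right]
    rw [EuclideanSpace.norm_eq, EuclideanSpace.norm_eq]
    apply Real.sqrt_le_sqrt
    have : ∀ i : Fin a, ‖(toEuc ((Z.submatrix (Fin.castAdd b) (Fin.castAdd c)) *ᵥ v)) i‖ ^ 2
        = ‖(toEuc (Z *ᵥ w)) (Fin.castAdd b i)‖ ^ 2 := by
      intro i
      have := key i
      simp only [toEuc] at *
      rw [this]
    calc ∑ i : Fin a, ‖(toEuc ((Z.submatrix (Fin.castAdd b) (Fin.castAdd c)) *ᵥ v)) i‖ ^ 2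
        = ∑ i : Fin a, ‖(toEuc (Z *ᵥ w)) (Fin.castAdd b i)‖ ^ 2 :=
          Finset.sum_congr rfl (fun i _ => this i)
      _ ≤ ∑ i : Fin (a + b), ‖(toEuc (Z *ᵥ w)) i‖ ^ 2 := by
          rw [Fin.sum_univ_add]
          have h0 : (0:ℝ) ≤ ∑ i : Fin b, ‖(toEuc (Z *ᵥ w)) (Fin.natAdd a i)‖ ^ 2 :=
            Finset.sum_nonneg fun i _ => sq_nonneg _
          linarith

end SVhelp

open SVhelp

/-- under assumptions (1)–(3) on the approximate rank-`s`
decomposition `M ≈ G * S`, the smallest singular value of the sample matrix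
`A_M` satisfies `(σ_s(M) − e_s)/(β²γ) − e_s ≤ σ_s(A_M)`. -/
theorem stmt4 (m n s : ℕ) (hs : 1 ≤ s)
    (M : Matrix (Fin (s + m)) (Fin (s + n)) ℝ)
    (G : Matrix (Fin (s + m)) (Fin s) ℝ) (S : Matrix (Fin s) (Fin (s + n)) ℝ)
    (es : ℝ) (hes : sv (M - G * S) 1 ≤ es)
    (GA : Matrix (Fin s) (Fin s) ℝ) (hGAdef : GA = G.submatrix (Fin.castAdd m) id)
    (SA : Matrix (Fin s) (Fin s) ℝ) (hSAdef : SA = S.submatrix id (Fin.castAdd n))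
    (AM : Matrix (Fin s) (Fin s) ℝ)
    (hAMdef : AM = M.submatrix (Fin.castAdd m) (Fin.castAdd n))
    (h1 : 0 < sv (G * S) s)
    (γ : ℝ) (hγ : 1 ≤ γ) (h2 : sv G s * sv S s = sv (G * S) s / γ)
    (β : ℝ) (hβ : 1 ≤ β) (h3G : sv G s / β ≤ sv GA s) (h3S : sv S s / β ≤ sv SA s) :
    (sv M s - es) / (β ^ 2 * γ) - es ≤ sv AM s := by
  have hs0 : 0 < s := hs
  have hβ0 : (0:ℝ) < β := by linarith
  have hγ0 : (0:ℝ) < γ := by linarith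
  -- Step A : sv M s ≤ sv (G*S) s + es
  have hA : sv M s ≤ sv (G * S) s + es := by
    have := sv_weyl M (G * S) s hs (by omega)
    linarith
  -- Step key : GA * SA - AM = (G*S - M).submatrix
  have hkey : GA * SA - AM = (G * S - M).submatrix (Fin.castAdd m) (Fin.castAdd n) := by
    subst hGAdef hSAdef hAMdef
    ext i j
    simp [Matrix.mul_apply, Matrix.sub_apply, Matrix.submatrix_apply]
  -- Step E : sv ((G*S - M).submatrix ...) 1 ≤ es
  have hE : sv ((G * S - M).submatrix (Fin.castAdd m) (Fin.castAdd n)) 1 ≤ es := by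
    refine sv_le_of_forall _ 1 (by omega) (fun x hx => ?_)
    obtain ⟨w, hw1, hw2⟩ := submatrix_pad s m n (G * S - M) x
    refine le_trans hw2 ?_
    have hneg : toEuc ((G * S - M) *ᵥ w) = toEuc (-((M - G * S) *ᵥ w)) := by
      congr 1
      show (G * S - M) *ᵥ (w : Fin (s+n) → ℝ) = -((M - G * S) *ᵥ (w : Fin (s+n) → ℝ))
      rw [← Matrix.neg_mulVec, neg_sub]
    have hnorm : ‖toEuc ((G * S - M) *ᵥ w)‖ = ‖toEuc ((M - G * S) *ᵥ w)‖ := by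
      rw [hneg]
      show ‖-(toEuc ((M - G * S) *ᵥ w))‖ = _
      exact norm_neg _
    rw [hnorm]
    calc ‖toEuc ((M - G * S) *ᵥ w)‖ ≤ sv (M - G * S) 1 * ‖w‖ :=
          norm_le_sv_one (M - G * S) (by omega) w
      _ ≤ es * ‖w‖ := mul_le_mul_of_nonneg_right hes (norm_nonneg _)
      _ = es := by rw [hw1, hx, mul_one]
  -- Step D : sv (GA*SA) s ≤ sv AM s + es
  have hD : sv (GA * SA) s ≤ sv AM s + es := by
    have := sv_weyl (GA * SA) AM s hs (le_refl s)
    rw [hkey] at this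
    linarith
  -- Step C : sv GA s * sv SA s ≤ sv (GA*SA) s
  have hC : sv GA s * sv SA s ≤ sv (GA * SA) s := by
    obtain ⟨x, hx1, hx2⟩ := sv_attained (GA * SA) s (by omega)
    rw [← hx2]
    have hSAx : sv SA s * ‖x‖ ≤ ‖toEuc (SA *ᵥ x)‖ := sv_min_mul_norm_le SA hs0 x
    have hGAx : sv GA s * ‖toEuc (SA *ᵥ x)‖ ≤ ‖toEuc (GA *ᵥ (toEuc (SA *ᵥ x)))‖ :=
      sv_min_mul_norm_le GA hs0 _
    have hcomp : toEuc (GA *ᵥ (toEuc (SA *ᵥ x))) = toEuc ((GA * SA) *ᵥ x) := by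
      congr 1
      show GA *ᵥ (SA *ᵥ (x : Fin s → ℝ)) = (GA * SA) *ᵥ (x : Fin s → ℝ)
      rw [Matrix.mulVec_mulVec]
    rw [hcomp] at hGAx
    have h0GA : 0 ≤ sv GA s := sv_nonneg GA s
    calc sv GA s * sv SA s = sv GA s * (sv SA s * ‖x‖) := by rw [hx1, mul_one]
      _ ≤ sv GA s * ‖toEuc (SA *ᵥ x)‖ := mul_le_mul_of_nonneg_left hSAx h0GA
      _ ≤ ‖toEuc ((GA * SA) *ᵥ x)‖ := hGAx
  -- arithmetic combination
  have hGS : sv (G * S) s = γ * (sv G s * sv S s) := by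
    rw [h2]; field_simp
  have hfrac : (sv M s - es) / (β ^ 2 * γ) ≤ (sv G s / β) * (sv S s / β) := by
    have hpos : (0:ℝ) < β ^ 2 * γ := by positivity
    have h5 : sv M s - es ≤ γ * (sv G s * sv S s) := by rw [← hGS]; linarith
    rw [div_le_iff₀ hpos]
    have : (sv G s / β) * (sv S s / β) * (β ^ 2 * γ) = γ * (sv G s * sv S s) := by
      field_simp
    rw [this]
    exact h5
  have hmul : (sv G s / β) * (sv S s / β) ≤ sv GA s * sv SA s := by
    have h6 : 0 ≤ sv S s / β := div_nonneg (sv_nonneg S s) (le_of_lt hβ0)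
    have h7 : 0 ≤ sv GA s := le_trans (div_nonneg (sv_nonneg G s) (le_of_lt hβ0)) h3G
    exact mul_le_mul h3G h3S h6 h7
  linarith
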